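/- Let n ≥ 4 be an even integer and let {x_1,…,x_{2n+1}} be the diminished trapezohedron vertex set. Then this set is extremal: all pairwise distances are at most 1, and the number of unordered pairs {i,j} with 1 ≤ i < j ≤ 2n+1 and |x_i − x_j| = 1 is exactly 4n = 2(2n+1) − 2. -/

import Mathlib

set_option maxHeartbeats 1000000

open Real MeasureTheory Metric

noncomputable def pt (a b c : ℝ) : EuclideanSpace ℝ (Fin 3) :=
  (EuclideanSpace.equiv (Fin 3) ℝ).symm ![a, b, c]

/-- The rotation of ℝ³ by angle θ about the x₃-axis. -/
noncomputable def rotZ (θ : ℝ) (p : EuclideanSpace ℝ (Fin 3)) : EuclideanSpace ℝ (Fin 3) :=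
  pt (Real.cos θ * p 0 - Real.sin θ * p 1) (Real.sin θ * p 0 + Real.cos θ * p 1) (p 2)

namespace Stmt4Aux

@[simp] lemma pt_apply0 (a b c : ℝ) : pt a b c 0 = a := rfl
@[simp] lemma pt_apply1 (a b c : ℝ) : pt a b c 1 = b := rfl
@[simp] lemma pt_apply2 (a b c : ℝ) : pt a b c 2 = c := rfl

lemma pt_add (a b c d e f : ℝ) : pt a b c + pt d e f = pt (a+d) (b+e) (c+f) := by
  ext i; fin_cases i <;> simp [pt]

lemma pt_smul (s a b c : ℝ) : s • pt a b c = pt (s*a) (s*b) (s*c) := by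
  ext i; fin_cases i <;> simp [pt]

lemma dist_pt (a b c d e f : ℝ) :
    dist (pt a b c) (pt d e f) = Real.sqrt ((a-d)^2+(b-e)^2+(c-f)^2) := by
  rw [EuclideanSpace.dist_eq]
  congr 1
  simp [Fin.sum_univ_three, pt, Real.dist_eq, sq_abs]

lemma dist_ring (α β h k : ℝ) :
    dist (pt ((1/2)*Real.cos α) ((1/2)*Real.sin α) h) (pt ((1/2)*Real.cos β) ((1/2)*Real.sin β) k)
      = Real.sqrt (Real.sin ((α-β)/2)^2 + (h-k)^2) := by
  rw [dist_pt]
  congr 1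
  have h3 : Real.cos (α - β) = Real.cos α * Real.cos β + Real.sin α * Real.sin β :=
    Real.cos_sub α β
  have h4 : Real.cos (α - β) = 1 - 2 * Real.sin ((α-β)/2)^2 := by
    have c2 := Real.cos_sq ((α-β)/2)
    rw [mul_div_cancel₀ (α-β) (two_ne_zero)] at c2
    nlinarith [Real.sin_sq_add_cos_sq ((α-β)/2)]
  nlinarith [Real.sin_sq_add_cos_sq α, Real.sin_sq_add_cos_sq β]

lemma prod_ident (θ c : ℝ) :
    Real.cos (θ+c) * Real.cos (θ-c) = 1 - Real.sin c ^2 - Real.sin θ ^2 := by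
  rw [Real.cos_add, Real.cos_sub]
  nlinarith [Real.sin_sq_add_cos_sq θ, Real.sin_sq_add_cos_sq c]

lemma rot_ring (φ α h : ℝ) :
    rotZ φ (pt ((1/2)*Real.cos α) ((1/2)*Real.sin α) h)
      = pt ((1/2)*Real.cos (α+φ)) ((1/2)*Real.sin (α+φ)) h := by
  ext i; fin_cases i <;>
    simp [rotZ, pt, Real.cos_add, Real.sin_add] <;> ring

lemma cos_pos_lt (m k : ℕ) (hm : 1 ≤ m) (hk : k < m) : 0 < Real.cos (π * k / (2*m)) := by
  apply Real.cos_pos_of_mem_Ioo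
  have hπ := Real.pi_pos
  have hm' : (0:ℝ) < m := by exact_mod_cast hm
  have hk' : (k:ℝ) < m := by exact_mod_cast hk
  constructor
  · have : (0:ℝ) ≤ π * k / (2*m) := by positivity
    linarith
  · rw [div_lt_iff₀ (by linarith)]
    have hk0 : (0:ℝ) ≤ (k:ℝ) := Nat.cast_nonneg k
    nlinarith

lemma cos_eq_zero_m (m : ℕ) (hm : 1 ≤ m) : Real.cos (π * m / (2*m)) = 0 := by
  have hm' : (m:ℝ) ≠ 0 := by positivity
  have : π * m / (2*m) = π / 2 := by field_simp
  rw [this, Real.cos_pi_div_two]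

lemma cos_neg_mid (m k : ℕ) (hm : 1 ≤ m) (h1 : m < k) (h2 : k < 3*m) :
    Real.cos (π * k / (2*m)) < 0 := by
  have hπ := Real.pi_pos
  have hm' : (0:ℝ) < m := by exact_mod_cast hm
  have h1' : (m:ℝ) < k := by exact_mod_cast h1
  have h2' : (k:ℝ) < 3*m := by exact_mod_cast h2
  apply Real.cos_neg_of_pi_div_two_lt_of_lt
  · rw [lt_div_iff₀ (by linarith)]; nlinarith
  · rw [div_lt_iff₀ (by linarith)]; nlinarith

lemma cos_eq_zero_3m (m : ℕ) (hm : 1 ≤ m) : Real.cos (π * (3*(m:ℝ)) / (2*(m:ℝ))) = 0 := by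
  have hm' : (m:ℝ) ≠ 0 := by positivity
  have : π * (3*(m:ℝ)) / (2*m) = π + π / 2 := by field_simp; ring
  rw [this]; simp [Real.cos_add]

lemma cos_pos_high (m k : ℕ) (hm : 1 ≤ m) (h1 : 3*m < k) (h2 : k ≤ 4*m) :
    0 < Real.cos (π * k / (2*m)) := by
  have hm' : (0:ℝ) < m := by exact_mod_cast hm
  have h1' : 3*(m:ℝ) < k := by exact_mod_cast h1
  have h2' : (k:ℝ) ≤ 4*m := by exact_mod_cast h2
  have hπ := Real.pi_pos
  have : π * k / (2*m) = 2*π - (2*π - π * k / (2*m)) := by ring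
  rw [this, Real.cos_two_pi_sub]
  apply Real.cos_pos_of_mem_Ioo
  constructor
  · have : π * k / (2*m) ≤ 2*π := by rw [div_le_iff₀ (by linarith)]; nlinarith
    linarith
  · have : (3:ℝ)*π/2 < π * k / (2*m) := by rw [lt_div_iff₀ (by linarith)]; nlinarith
    linarith

lemma prod_sign (m D : ℕ) (hm : 2 ≤ m) (h1 : 1 ≤ D) (h2 : D ≤ 4*m - 1) :
    0 ≤ Real.cos (π * (D+1) / (2*m)) * Real.cos (π * D / (2*m)) ∧
    (Real.cos (π * (D+1) / (2*m)) * Real.cos (π * D / (2*m)) = 0 ↔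
      D = m - 1 ∨ D = m ∨ D = 3*m - 1 ∨ D = 3*m) := by
  have hm1 : 1 ≤ m := by omega
  have hcast : ((D:ℝ)) + 1 = ((D+1 : ℕ) : ℝ) := by push_cast; ring
  rcases lt_trichotomy D (m-1) with h | h | h
  · have p1 : 0 < Real.cos (π * ((D:ℝ)+1) / (2*m)) := by
      rw [hcast]; exact cos_pos_lt m (D+1) hm1 (by omega)
    have p2 : 0 < Real.cos (π * D / (2*m)) := cos_pos_lt m D hm1 (by omega)
    refine ⟨by positivity, ⟨fun he => by nlinarith, fun he => by omega⟩⟩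
  · have e1 : ((D:ℝ)+1) = (m:ℝ) := by
      have h' : D + 1 = m := by omega
      exact_mod_cast congrArg (Nat.cast (R := ℝ)) h'
    rw [e1, cos_eq_zero_m m hm1, zero_mul]
    exact ⟨le_refl 0, by simp; omega⟩
  · rcases lt_trichotomy D m with h' | h' | h'
    · omega
    · have e1 : (D:ℝ) = (m:ℝ) := by exact_mod_cast congrArg (Nat.cast (R := ℝ)) h'
      rw [e1, cos_eq_zero_m m hm1, mul_zero]
      exact ⟨le_refl 0, by simp; omega⟩
    · rcases lt_trichotomy D (3*m-1) with h'' | h'' | h''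
      · have p1 : Real.cos (π * ((D:ℝ)+1) / (2*m)) < 0 := by
          rw [hcast]; exact cos_neg_mid m (D+1) hm1 (by omega) (by omega)
        have p2 : Real.cos (π * D / (2*m)) < 0 := cos_neg_mid m D hm1 h' (by omega)
        refine ⟨by nlinarith, ⟨fun he => by nlinarith, fun he => by omega⟩⟩
      · have e1 : ((D:ℝ)+1) = 3*(m:ℝ) := by
          have h' : D + 1 = 3*m := by omega
          have := congrArg (Nat.cast (R := ℝ)) h'
          push_cast at this; linarith
        rw [e1, cos_eq_zero_3m m hm1, zero_mul]
        exact ⟨le_refl 0, by simp; omega⟩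
      · rcases lt_trichotomy D (3*m) with h3 | h3 | h3
        · omega
        · have e1 : (D:ℝ) = 3*(m:ℝ) := by
            have := congrArg (Nat.cast (R := ℝ)) h3
            push_cast at this; linarith
          rw [e1, cos_eq_zero_3m m hm1, mul_zero]
          refine ⟨le_refl 0, by simp; omega⟩
        · have p1 : 0 < Real.cos (π * ((D:ℝ)+1) / (2*m)) := by
            rw [hcast]; exact cos_pos_high m (D+1) hm1 (by omega) (by omega)
          have p2 : 0 < Real.cos (π * D / (2*m)) := cos_pos_high m D hm1 h3 (by omega)
          refine ⟨by positivity, ⟨fun he => by nlinarith, fun he => by omega⟩⟩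

lemma sin_sq_le_and_eq_iff (m D : ℕ) (hm : 1 ≤ m) (h1 : 1 ≤ D) (h2 : D ≤ 2*m - 1) :
    (Real.sin (π * D / (2*m)) ^ 2 = 1 ↔ D = m) ∧ Real.sin (π * D / (2*m)) ^ 2 ≤ 1 := by
  have hm' : (0:ℝ) < m := by exact_mod_cast hm
  have hπ := Real.pi_pos
  constructor
  · constructor
    · intro he
      have hc : Real.cos (π * D / (2*m)) = 0 := by
        nlinarith [Real.sin_sq_add_cos_sq (π * D / (2*m)), sq_nonneg (Real.cos (π * D / (2*m)))]
      rw [Real.cos_eq_zero_iff] at hc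
      obtain ⟨k, hk⟩ := hc
      have h2' : π * (D:ℝ) * 2 = (2*(k:ℝ)+1) * π * (2*m) := by
        rw [div_eq_div_iff (by positivity) (by norm_num : (2:ℝ) ≠ 0)] at hk
        linarith [hk]
      have hD : (2*k+1) * (m:ℤ) = (D:ℤ) := by
        have : ((2*k+1 : ℤ):ℝ) * m = D := by
          apply mul_left_cancel₀ (show (2:ℝ)*π ≠ 0 by positivity)
          push_cast
          linear_combination -h2'
        exact_mod_cast this
      have hDle : (D:ℤ) ≤ 2*m - 1 := by
        have : (D:ℤ) ≤ (2*m - 1 : ℕ) := by exact_mod_cast h2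
        omega
      have hD1 : (1:ℤ) ≤ D := by exact_mod_cast h1
      have hmi : (1:ℤ) ≤ m := by exact_mod_cast hm
      have hk0 : k = 0 := by
        rcases lt_trichotomy k 0 with hk' | hk' | hk'
        · have := mul_le_mul_of_nonneg_right (show (2*k+1:ℤ) ≤ -1 by omega)
            (show (0:ℤ) ≤ m by omega)
          nlinarith
        · exact hk'
        · have := mul_le_mul_of_nonneg_right (show (3:ℤ) ≤ 2*k+1 by omega)
            (show (0:ℤ) ≤ m by omega)
          nlinarith
      rw [hk0] at hD
      simp at hD
      exact_mod_cast hD.symm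
    · intro he
      have hDm : (D:ℝ) = m := by exact_mod_cast congrArg (Nat.cast (R := ℝ)) he
      rw [hDm]
      have hm0 : (m:ℝ) ≠ 0 := by positivity
      rw [show π * (m:ℝ) / (2*m) = π/2 by field_simp, Real.sin_pi_div_two]
      norm_num
  · nlinarith [Real.neg_one_le_sin (π * D / (2*m)), Real.sin_le_one (π * D / (2*m))]

end Stmt4Aux

open Stmt4Aux in
/-- The diminished trapezohedron vertex set is extremal. -/
theorem stmt_4 (n : ℕ) (hn : 4 ≤ n) (heven : Even n)
    (x : ℕ → EuclideanSpace ℝ (Fin 3))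
    (hbase : ∀ j, 1 ≤ j → j ≤ n →
      x j = pt ((1 / 2) * Real.cos (2 * π * j / n)) ((1 / 2) * Real.sin (2 * π * j / n)) 0)
    (hmid : ∀ j, 1 ≤ j → j ≤ n →
      x (n + j) = rotZ (π / n) (x j) + Real.sin (π / (2 * n)) • pt 0 0 1)
    (hapex : x (2 * n + 1) = (Real.sqrt 3 / 2) • pt 0 0 1) :
    (∀ i j, 1 ≤ i → i ≤ 2 * n + 1 → 1 ≤ j → j ≤ 2 * n + 1 → dist (x i) (x j) ≤ 1) ∧
    ((Finset.Icc 1 (2 * n + 1) ×ˢ Finset.Icc 1 (2 * n + 1)).filter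
        (fun p => p.1 < p.2 ∧ dist (x p.1) (x p.2) = 1)).card = 4 * n := by
  obtain ⟨m, hnm⟩ : ∃ m, n = 2 * m := by
    obtain ⟨r, hr⟩ := heven; exact ⟨r, by omega⟩
  subst hnm
  have hm : 2 ≤ m := by omega
  have hm1 : 1 ≤ m := by omega
  have hmR : (0:ℝ) < m := by exact_mod_cast hm1
  have hπ := Real.pi_pos
  set s : ℝ := Real.sin (π / (2 * ((2*m : ℕ):ℝ))) with hs_def
  have hsc : (2 : ℝ) * ((2*m : ℕ):ℝ) = 4 * m := by push_cast; ring
  have hs4 : s = Real.sin (π / (4*(m:ℝ))) := by rw [hs_def, hsc]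
  -- normalized coordinates
  have coordB : ∀ i : ℕ, 1 ≤ i → i ≤ 2*m →
      x i = pt ((1/2)*Real.cos (2*π*i/(2*(m:ℝ)))) ((1/2)*Real.sin (2*π*i/(2*(m:ℝ)))) 0 := by
    intro i h1 h2
    rw [hbase i h1 h2]
    have : ((2*m : ℕ):ℝ) = 2*(m:ℝ) := by push_cast; ring
    rw [this]
  have coordM : ∀ k : ℕ, 1 ≤ k → k ≤ 2*m →
      x (2*m + k) = pt ((1/2)*Real.cos (π*(2*(k:ℝ)+1)/(2*(m:ℝ))))
        ((1/2)*Real.sin (π*(2*(k:ℝ)+1)/(2*(m:ℝ)))) s := by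
    intro k h1 h2
    rw [hmid k h1 h2, coordB k h1 h2, rot_ring, pt_smul, pt_add]
    have e1 : 2*π*(k:ℝ)/(2*(m:ℝ)) + π/((2*m:ℕ):ℝ) = π*(2*(k:ℝ)+1)/(2*(m:ℝ)) := by
      push_cast
      field_simp
    rw [e1]
    norm_num
  have apexpt : x (2*(2*m) + 1) = pt 0 0 (Real.sqrt 3 / 2) := by
    rw [hapex, pt_smul]; norm_num
  -- distance formulas
  have dBB : ∀ i j : ℕ, 1 ≤ i → i < j → j ≤ 2*m →
      dist (x i) (x j) = Real.sqrt (Real.sin (π * ((j-i : ℕ):ℝ) / (2*(m:ℝ)))^2) := by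
    intro i j h1 hij h2
    rw [coordB i h1 (by omega), coordB j (by omega) h2, dist_ring]
    have e1 : (2*π*(i:ℝ)/(2*(m:ℝ)) - 2*π*(j:ℝ)/(2*(m:ℝ)))/2 = -(π * ((j-i : ℕ):ℝ) / (2*(m:ℝ))) := by
      rw [Nat.cast_sub hij.le]
      field_simp
      ring
    rw [e1, Real.sin_neg]
    congr 1
    ring
  have dMM : ∀ i j : ℕ, 1 ≤ i → i < j → j ≤ 2*m →
      dist (x (2*m+i)) (x (2*m+j)) =
        Real.sqrt (Real.sin (π * ((j-i : ℕ):ℝ) / (2*(m:ℝ)))^2) := by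
    intro i j h1 hij h2
    rw [coordM i h1 (by omega), coordM j (by omega) h2, dist_ring]
    have e1 : (π*(2*(i:ℝ)+1)/(2*(m:ℝ)) - π*(2*(j:ℝ)+1)/(2*(m:ℝ)))/2
        = -(π * ((j-i : ℕ):ℝ) / (2*(m:ℝ))) := by
      rw [Nat.cast_sub hij.le]
      field_simp
      ring
    rw [e1, Real.sin_neg]
    congr 1
    ring
  have dBM : ∀ i k : ℕ, 1 ≤ i → i ≤ 2*m → 1 ≤ k → k ≤ 2*m →
      dist (x i) (x (2*m+k)) =
        Real.sqrt (Real.sin (π * (2*((2*m+k-i : ℕ):ℝ)+1) / (4*(m:ℝ)))^2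
          + Real.sin (π/(4*(m:ℝ)))^2) := by
    intro i k h1 h2 h3 h4
    rw [coordB i h1 h2, coordM k h3 h4, dist_ring]
    have e1 : (2*π*(i:ℝ)/(2*(m:ℝ)) - π*(2*(k:ℝ)+1)/(2*(m:ℝ)))/2
        = π - π * (2*((2*m+k-i : ℕ):ℝ)+1) / (4*(m:ℝ)) := by
      rw [Nat.cast_sub (by omega : i ≤ 2*m+k)]
      push_cast
      field_simp
      ring
    rw [e1, Real.sin_pi_sub, hs4]
    congr 1
    ring
  -- the combinatorial predicate
  set P : ℕ → ℕ → Prop := fun i j =>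
    (j = 4*m+1 ∧ i ≤ 2*m) ∨ (j ≤ 4*m ∧ (j = i + m ∨ j = i + 3*m ∨
      (j = i + (m-1) ∧ 2*m+1 ≤ j ∧ i ≤ 2*m) ∨ j = i + (3*m-1))) with hP_def
  -- key classification
  have key : ∀ i j : ℕ, 1 ≤ i → i < j → j ≤ 2*(2*m)+1 →
      dist (x i) (x j) ≤ 1 ∧ (dist (x i) (x j) = 1 ↔ P i j) := by
    intro i j h1 hij h2
    rcases Nat.lt_or_ge j (2*m+1) with hj | hj
    · -- both base
      have h2' : j ≤ 2*m := by omega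
      rw [dBB i j h1 hij h2']
      obtain ⟨hiff, hle⟩ := sin_sq_le_and_eq_iff m (j-i) hm1 (by omega) (by omega)
      constructor
      · exact le_trans (Real.sqrt_le_sqrt hle) (by rw [Real.sqrt_one])
      · rw [Real.sqrt_eq_one, hiff, hP_def]
        constructor
        · intro h; right; exact ⟨by omega, Or.inl (by omega)⟩
        · intro h
          rcases h with ⟨ha, _⟩ | ⟨hb, hc | hc | ⟨hc, hc2, _⟩ | hc⟩ <;> omega
    · rcases Nat.lt_or_ge j (4*m+1) with hj' | hj'
      · -- j is mid
        rcases Nat.lt_or_ge i (2*m+1) with hi | hi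
        · -- base-mid
          have hk1 : 1 ≤ j - 2*m := by omega
          have hk2 : j - 2*m ≤ 2*m := by omega
          have hd := dBM i (j-2*m) h1 (by omega) hk1 hk2
          rw [show 2*m + (j-2*m) = j by omega] at hd
          rw [hd]
          set D := j - i with hD_def
          have hident : Real.sin (π * (2*((D:ℕ):ℝ)+1) / (4*(m:ℝ)))^2 + Real.sin (π/(4*(m:ℝ)))^2
              = 1 - Real.cos (π * ((D:ℝ)+1) / (2*(m:ℝ))) * Real.cos (π * (D:ℝ) / (2*(m:ℝ))) := by
            have e1 : π * ((D:ℝ)+1) / (2*(m:ℝ))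
                = (π * (2*((D:ℕ):ℝ)+1) / (4*(m:ℝ))) + (π/(4*(m:ℝ))) := by
              field_simp; ring
            have e2 : π * (D:ℝ) / (2*(m:ℝ))
                = (π * (2*((D:ℕ):ℝ)+1) / (4*(m:ℝ))) - (π/(4*(m:ℝ))) := by
              field_simp; ring
            rw [e1, e2, prod_ident]
            ring
          obtain ⟨hge, hiff⟩ := prod_sign m D hm (by omega) (by omega)
          rw [hident]
          constructor
          · have hle1 : (1:ℝ) - Real.cos (π * ((D:ℝ)+1) / (2*(m:ℝ))) * Real.cos (π * (D:ℝ) / (2*(m:ℝ))) ≤ 1 := by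
              linarith
            exact le_trans (Real.sqrt_le_sqrt hle1) (by rw [Real.sqrt_one])
          · rw [Real.sqrt_eq_one]
            constructor
            · intro h
              have : Real.cos (π * ((D:ℝ)+1) / (2*(m:ℝ))) * Real.cos (π * (D:ℝ) / (2*(m:ℝ))) = 0 := by
                linarith
              have hcases := hiff.mp this
              rw [hP_def]
              right
              refine ⟨by omega, ?_⟩
              rcases hcases with h' | h' | h' | h'
              · right; right; left; exact ⟨by omega, by omega, by omega⟩
              · left; omega
              · right; right; right; omega
              · right; left; omega
            · intro h
              have : Real.cos (π * ((D:ℝ)+1) / (2*(m:ℝ))) * Real.cos (π * (D:ℝ) / (2*(m:ℝ))) = 0 := by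
                apply hiff.mpr
                rw [hP_def] at h
                rcases h with ⟨ha, _⟩ | ⟨hb, hc | hc | ⟨hc, _, _⟩ | hc⟩ <;> omega
              linarith
        · -- mid-mid
          have hi1 : 1 ≤ i - 2*m := by omega
          have hd := dMM (i-2*m) (j-2*m) hi1 (by omega) (by omega)
          rw [show 2*m + (i-2*m) = i by omega, show 2*m + (j-2*m) = j by omega,
            show (j-2*m) - (i-2*m) = j - i by omega] at hd
          rw [hd]
          obtain ⟨hiff, hle⟩ := sin_sq_le_and_eq_iff m (j-i) hm1 (by omega) (by omega)
          constructor
          · exact le_trans (Real.sqrt_le_sqrt hle) (by rw [Real.sqrt_one])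
          · rw [Real.sqrt_eq_one, hiff, hP_def]
            constructor
            · intro h; right; exact ⟨by omega, Or.inl (by omega)⟩
            · intro h
              rcases h with ⟨ha, _⟩ | ⟨hb, hc | hc | ⟨hc, hc2, hc3⟩ | hc⟩ <;> omega
      · -- j is the apex
        have hj4 : j = 4*m+1 := by omega
        rcases Nat.lt_or_ge i (2*m+1) with hi | hi
        · -- apex-base : distance exactly 1
          rw [hj4, show 4*m+1 = 2*(2*m)+1 by ring, apexpt, coordB i h1 (by omega), dist_pt]
          have hsq3 : Real.sqrt 3 ^ 2 = 3 := Real.sq_sqrt (by norm_num)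
          have e1 : ((1/2)*Real.cos (2*π*(i:ℝ)/(2*(m:ℝ))) - 0)^2
              + ((1/2)*Real.sin (2*π*(i:ℝ)/(2*(m:ℝ))) - 0)^2 + (0 - Real.sqrt 3/2)^2 = 1 := by
            have := Real.sin_sq_add_cos_sq (2*π*(i:ℝ)/(2*(m:ℝ)))
            nlinarith
          rw [e1, Real.sqrt_one]
          constructor
          · exact le_refl 1
          · rw [hP_def]
            constructor
            · intro _; left; exact ⟨by omega, by omega⟩
            · intro _; rfl
        · -- apex-mid : distance < 1
          have hi1 : 1 ≤ i - 2*m := by omega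
          have hd := coordM (i-2*m) hi1 (by omega)
          rw [show 2*m + (i-2*m) = i by omega] at hd
          rw [hj4, show 4*m+1 = 2*(2*m)+1 by ring, apexpt, hd, dist_pt]
          have hsq3 : Real.sqrt 3 ^ 2 = 3 := Real.sq_sqrt (by norm_num)
          have hs_pos : 0 < s := by
            rw [hs4]
            apply Real.sin_pos_of_pos_of_lt_pi
            · positivity
            · rw [div_lt_iff₀ (by positivity)]
              have hmR1 : (1:ℝ) ≤ m := by exact_mod_cast hm1
              nlinarith [mul_le_mul_of_nonneg_left (show (1:ℝ) ≤ 4*m by linarith)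
                (le_of_lt hπ)]
          have hs_le : s ≤ 1 := by rw [hs4]; exact Real.sin_le_one _
          have hsqrt3 : (1:ℝ) < Real.sqrt 3 := by nlinarith [Real.sqrt_nonneg 3]
          set α := π*(2*((i-2*m:ℕ):ℝ)+1)/(2*(m:ℝ))
          have e1 : ((1/2)*Real.cos α - 0)^2 + ((1/2)*Real.sin α - 0)^2
              + (s - Real.sqrt 3/2)^2 = 1/4 + (s - Real.sqrt 3/2)^2 := by
            have := Real.sin_sq_add_cos_sq α
            nlinarith
          rw [e1]
          have hlt : 1/4 + (s - Real.sqrt 3/2)^2 < 1 := by nlinarith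
          constructor
          · have h14 : (1:ℝ)/4 + (s - Real.sqrt 3/2)^2 ≤ 1 := le_of_lt hlt
            exact le_trans (Real.sqrt_le_sqrt h14) (by rw [Real.sqrt_one])
          · rw [Real.sqrt_eq_one, hP_def]
            constructor
            · intro h; linarith
            · intro h
              rcases h with ⟨_, hb⟩ | ⟨hb, _⟩ <;> omega
  refine ⟨?_, ?_⟩
  · -- all distances at most 1
    intro i j h1 h2 h3 h4
    rcases lt_trichotomy i j with h | h | h
    · exact (key i j h1 h h4).1
    · rw [h, dist_self]; norm_num
    · rw [dist_comm]; exact (key j i h3 h h2).1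
  · -- the count
    have hset : ((Finset.Icc 1 (2 * (2*m) + 1) ×ˢ Finset.Icc 1 (2 * (2*m) + 1)).filter
        (fun p => p.1 < p.2 ∧ dist (x p.1) (x p.2) = 1)) =
        ((Finset.Icc 1 (3*m)).image (fun i => (i, i + m)) ∪
         (Finset.Icc 1 m).image (fun i => (i, i + 3*m)) ∪
         (Finset.Icc (m+2) (2*m)).image (fun i => (i, i + (m-1))) ∪
         (Finset.Icc 1 (m+1)).image (fun i => (i, i + (3*m-1))) ∪
         (Finset.Icc 1 (2*m)).image (fun i => (i, 4*m+1))) := by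
      ext ⟨a, b⟩
      simp only [Finset.mem_filter, Finset.mem_product, Finset.mem_Icc, Finset.mem_union,
        Finset.mem_image, Prod.mk.injEq]
      constructor
      · rintro ⟨⟨⟨ha1, ha2⟩, hb1, hb2⟩, hab, hd⟩
        have hP := ((key a b ha1 hab hb2).2).mp hd
        rw [hP_def] at hP
        rcases hP with ⟨hb4, hi2⟩ | ⟨hb4, hc | hc | ⟨hc, hc2, hc3⟩ | hc⟩
        · right; exact ⟨a, by omega, by omega, by omega⟩
        · left; left; left; left; exact ⟨a, by omega, by omega, by omega⟩
        · left; left; left; right; exact ⟨a, by omega, by omega, by omega⟩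
        · left; left; right; exact ⟨a, by omega, by omega, by omega⟩
        · left; right; exact ⟨a, by omega, by omega, by omega⟩
      · intro h
        have hranges : 1 ≤ a ∧ a < b ∧ b ≤ 2*(2*m)+1 ∧ P a b := by
          rw [hP_def]
          rcases h with (((⟨i, hi, hia, hib⟩ | ⟨i, hi, hia, hib⟩) | ⟨i, hi, hia, hib⟩)
            | ⟨i, hi, hia, hib⟩) | ⟨i, hi, hia, hib⟩
          · exact ⟨by omega, by omega, by omega, Or.inr ⟨by omega, Or.inl (by omega)⟩⟩
          · exact ⟨by omega, by omega, by omega, Or.inr ⟨by omega, Or.inr (Or.inl (by omega))⟩⟩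
          · exact ⟨by omega, by omega, by omega,
              Or.inr ⟨by omega, Or.inr (Or.inr (Or.inl ⟨by omega, by omega, by omega⟩))⟩⟩
          · exact ⟨by omega, by omega, by omega,
              Or.inr ⟨by omega, Or.inr (Or.inr (Or.inr (by omega)))⟩⟩
          · exact ⟨by omega, by omega, by omega, Or.inl ⟨by omega, by omega⟩⟩
        obtain ⟨r1, r2, r3, r4⟩ := hranges
        refine ⟨⟨⟨r1, by omega⟩, by omega, r3⟩, r2, ?_⟩
        exact ((key a b r1 r2 r3).2).mpr r4
    rw [hset]
    have hinj : ∀ k : ℕ, Function.Injective (fun i : ℕ => (i, i + k)) := by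
      intro k a b h
      exact (Prod.ext_iff.mp h).1
    have hinj5 : Function.Injective (fun i : ℕ => (i, 4*m+1)) := by
      intro a b h
      exact (Prod.ext_iff.mp h).1
    rw [Finset.card_union_of_disjoint, Finset.card_union_of_disjoint,
      Finset.card_union_of_disjoint, Finset.card_union_of_disjoint]
    · rw [Finset.card_image_of_injective _ (hinj m), Finset.card_image_of_injective _ (hinj (3*m)),
        Finset.card_image_of_injective _ (hinj (m-1)),
        Finset.card_image_of_injective _ (hinj (3*m-1)),
        Finset.card_image_of_injective _ hinj5]
      simp only [Nat.card_Icc]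
      omega
    all_goals {
      rw [Finset.disjoint_left]
      rintro ⟨a, b⟩ hp1 hp2
      simp only [Finset.mem_union, Finset.mem_image, Finset.mem_Icc, Prod.mk.injEq] at hp1 hp2
      rcases hp2 with ⟨i, hi, hia, hib⟩
      rcases hp1 with (((⟨i', hi', hia', hib'⟩ | ⟨i', hi', hia', hib'⟩) | ⟨i', hi', hia', hib'⟩)
        | ⟨i', hi', hia', hib'⟩) | ⟨i', hi', hia', hib'⟩ <;> omega
    }
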